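/- Let A be a set, C a finite set of finite subsets of A, and Q a partition of the quotient set D of ⋃C by the relation x ∼ y ⟺ ∀c ∈ C (x ∈ c ↔ y ∈ c). Then {⋃q | q ∈ Q} ∪ {{x} | x ∈ A \ ⋃C} is a partition of A into finite blocks, and distinct partitions Q of D yield distinct partitions of A. -/
import Mathlib


/-- `P` is a partition of the set `X`: its blocks are nonempty subsets of `X`,
pairwise disjoint, with union `X`. -/
def IsPartitionOn {α : Type*} (X : Set α) (P : Set (Set α)) : Prop :=
  (∀ p ∈ P, p.Nonempty ∧ p ⊆ X) ∧
  (∀ p ∈ P, ∀ q ∈ P, p ≠ q → p ∩ q = ∅) ∧ ⋃₀ P = X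

/-- For `C` a finite set of finite subsets of `A`, `D` the quotient of `⋃₀ C` by the
relation of belonging to exactly the same members of `C`, and any partition `Q` of `D`,
the family `{⋃₀ q | q ∈ Q} ∪ {{x} | x ∈ A \ ⋃₀ C}` is a partition of `A` into finite
blocks, and distinct `Q`'s give distinct partitions of `A`. -/
theorem stmt_9 {A : Type*} (C : Set (Set A)) (hC : C.Finite)
    (hc : ∀ c ∈ C, c.Finite)
    (D : Set (Set A))
    (hD : D = {u | ∃ x ∈ ⋃₀ C, u = {y ∈ ⋃₀ C | ∀ c ∈ C, (x ∈ c ↔ y ∈ c)}})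
    (Φ : Set (Set (Set A)) → Set (Set A))
    (hΦ : ∀ Q, Φ Q = {p | ∃ q ∈ Q, p = ⋃₀ q} ∪ {p | ∃ x, x ∉ ⋃₀ C ∧ p = {x}}) :
    (∀ Q, IsPartitionOn D Q →
      IsPartitionOn (Set.univ : Set A) (Φ Q) ∧ ∀ p ∈ Φ Q, p.Finite) ∧
    Set.InjOn Φ {Q | IsPartitionOn D Q} := by
  have hUfin : (⋃₀ C).Finite := hC.sUnion hc
  have hDsub : ∀ u ∈ D, u ⊆ ⋃₀ C := by
    intro u hu; rw [hD] at hu; obtain ⟨x, hx, rfl⟩ := hu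
    intro y hy; exact hy.1
  have hDne : ∀ u ∈ D, u.Nonempty := by
    intro u hu; rw [hD] at hu; obtain ⟨x, hx, rfl⟩ := hu
    exact ⟨x, hx, fun c _ => Iff.rfl⟩
  have hDdisj : ∀ u ∈ D, ∀ v ∈ D, (u ∩ v).Nonempty → u = v := by
    rintro u hu v hv ⟨y, hyu, hyv⟩
    rw [hD] at hu hv
    obtain ⟨x, hx, rfl⟩ := hu; obtain ⟨x', hx', rfl⟩ := hv
    simp only [Set.mem_setOf_eq] at hyu hyv
    obtain ⟨hyU, hy1⟩ := hyu; obtain ⟨_, hy2⟩ := hyv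
    ext z
    simp only [Set.mem_setOf_eq]
    constructor
    · rintro ⟨hzU, hz⟩
      exact ⟨hzU, fun c hc => ((hy2 c hc).trans (hy1 c hc).symm).trans (hz c hc)⟩
    · rintro ⟨hzU, hz⟩
      exact ⟨hzU, fun c hc => ((hy1 c hc).trans (hy2 c hc).symm).trans (hz c hc)⟩
  have hcls : ∀ x ∈ ⋃₀ C, {y ∈ ⋃₀ C | ∀ c ∈ C, (x ∈ c ↔ y ∈ c)} ∈ D ∧
      x ∈ {y ∈ ⋃₀ C | ∀ c ∈ C, (x ∈ c ↔ y ∈ c)} := by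
    intro x hx
    exact ⟨hD ▸ ⟨x, hx, rfl⟩, hx, fun c _ => Iff.rfl⟩
  have key : ∀ q ⊆ D, ∀ q' ⊆ D, ⋃₀ q = ⋃₀ q' → q ⊆ q' := by
    intro q hq q' hq' h u hu
    obtain ⟨y, hy⟩ := hDne u (hq hu)
    have hy' : y ∈ ⋃₀ q' := h ▸ ⟨u, hu, hy⟩
    obtain ⟨v, hv, hyv⟩ := hy'
    have := hDdisj u (hq hu) v (hq' hv) ⟨y, hy, hyv⟩
    exact this ▸ hv
  constructor
  · intro Q hQ
    obtain ⟨hQ1, hQ2, hQ3⟩ := hQ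
    have hsubD : ∀ q ∈ Q, q ⊆ D := fun q hq => (hQ1 q hq).2
    constructor
    · refine ⟨?_, ?_, ?_⟩
      · intro p hp
        rw [hΦ] at hp
        rcases hp with ⟨q, hq, rfl⟩ | ⟨x, hx, rfl⟩
        · obtain ⟨u, hu⟩ := (hQ1 q hq).1
          obtain ⟨y, hy⟩ := hDne u (hsubD q hq hu)
          exact ⟨⟨y, u, hu, hy⟩, fun _ _ => trivial⟩
        · exact ⟨⟨x, rfl⟩, fun _ _ => trivial⟩
      · intro p hp p' hp' hne
        rw [hΦ] at hp hp'
        rw [Set.eq_empty_iff_forall_notMem]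
        rintro y ⟨hyp, hyp'⟩
        rcases hp with ⟨q, hq, rfl⟩ | ⟨x, hx, rfl⟩ <;>
          rcases hp' with ⟨q', hq', rfl⟩ | ⟨x', hx', rfl⟩
        · obtain ⟨u, hu, hyu⟩ := hyp
          obtain ⟨u', hu', hyu'⟩ := hyp'
          have huv : u = u' :=
            hDdisj u (hsubD q hq hu) u' (hsubD q' hq' hu') ⟨y, hyu, hyu'⟩
          have hqq' : q ≠ q' := fun h => hne (by rw [h])
          have hdis := hQ2 q hq q' hq' hqq'
          have : u' ∈ q ∩ q' := ⟨huv ▸ hu, hu'⟩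
          rw [hdis] at this
          exact this
        · obtain ⟨u, hu, hyu⟩ := hyp
          have hyU : y ∈ ⋃₀ C := hDsub u (hsubD q hq hu) hyu
          rw [Set.mem_singleton_iff] at hyp'
          exact hx' (hyp' ▸ hyU)
        · obtain ⟨u, hu, hyu⟩ := hyp'
          have hyU : y ∈ ⋃₀ C := hDsub u (hsubD q' hq' hu) hyu
          rw [Set.mem_singleton_iff] at hyp
          exact hx (hyp ▸ hyU)
        · rw [Set.mem_singleton_iff] at hyp hyp'
          exact hne (by rw [← hyp, ← hyp'])
      · ext a
        simp only [Set.mem_univ, iff_true]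
        rw [hΦ]
        by_cases ha : a ∈ ⋃₀ C
        · obtain ⟨hmem, hself⟩ := hcls a ha
          have hmem' : {y ∈ ⋃₀ C | ∀ c ∈ C, (a ∈ c ↔ y ∈ c)} ∈ ⋃₀ Q := hQ3 ▸ hmem
          obtain ⟨q, hq, hcq⟩ := hmem'
          exact ⟨⋃₀ q, Or.inl ⟨q, hq, rfl⟩, _, hcq, hself⟩
        · exact ⟨{a}, Or.inr ⟨a, ha, rfl⟩, rfl⟩
    · intro p hp
      rw [hΦ] at hp
      rcases hp with ⟨q, hq, rfl⟩ | ⟨x, hx, rfl⟩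
      · exact hUfin.subset (fun y ⟨u, hu, hyu⟩ => hDsub u (hsubD q hq hu) hyu)
      · exact Set.finite_singleton x
  · have mono : ∀ Q ∈ {Q | IsPartitionOn D Q}, ∀ Q' ∈ {Q | IsPartitionOn D Q},
        Φ Q = Φ Q' → Q ⊆ Q' := by
      intro Q hQ Q' hQ' h q hq
      obtain ⟨hQ1, hQ2, hQ3⟩ := hQ
      obtain ⟨hQ1', hQ2', hQ3'⟩ := hQ'
      have hsub : q ⊆ D := (hQ1 q hq).2
      have hmem : ⋃₀ q ∈ Φ Q := by
        rw [hΦ]; exact Or.inl ⟨q, hq, rfl⟩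
      rw [h, hΦ] at hmem
      rcases hmem with ⟨q', hq', heq⟩ | ⟨x, hx, heq⟩
      · have hsub' : q' ⊆ D := (hQ1' q' hq').2
        have h1 : q ⊆ q' := key q hsub q' hsub' heq
        have h2 : q' ⊆ q := key q' hsub' q hsub heq.symm
        exact (h1.antisymm h2) ▸ hq'
      · obtain ⟨u, hu⟩ := (hQ1 q hq).1
        obtain ⟨y, hy⟩ := hDne u (hsub hu)
        have : y ∈ ({x} : Set A) := heq ▸ ⟨u, hu, hy⟩
        rw [Set.mem_singleton_iff] at this
        exact absurd (this ▸ hDsub u (hsub hu) hy) hx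
    exact fun Q hQ Q' hQ' h => (mono Q hQ Q' hQ' h).antisymm (mono Q' hQ' Q hQ h.symm)
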